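/- Let h ∈ L¹_loc(Ω) with Re(h) ≥ 0 on a measurable set W ⊆ Ω and {Re(h) = 0} ∩ W a Lebesgue null set, and let D be a disk relatively compact in Ω. Then lim_{ε→0⁺} (1/Log(1/ε)) ∬_{D ∩ W} |Log|ε + h(z)|| dxdy = 0. -/

import Mathlib

open MeasureTheory Metric Filter

/-- (6) in the paper: for locally integrable `h` with `Re h ≥ 0` on `W` and
`{Re h = 0} ∩ W` a null set, the integral of `|log|ε + h||` over `D ∩ W`, divided by
`log(1/ε)`, tends to `0` as `ε → 0⁺`. -/
theorem log_integral_tendsto_zero (Ω W : Set ℂ) (hΩ : IsOpen Ω)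
    (hW : MeasurableSet W) (hWΩ : W ⊆ Ω)
    (h : ℂ → ℂ) (hloc : LocallyIntegrableOn h Ω)
    (hre : ∀ z ∈ W, 0 ≤ (h z).re)
    (hnull : volume {z ∈ W | (h z).re = 0} = 0)
    (z₀ : ℂ) (δ : ℝ) (hδ : 0 < δ) (hcl : closedBall z₀ δ ⊆ Ω) :
    Tendsto (fun ε : ℝ =>
        (1 / Real.log (1 / ε)) *
          ∫ z in ball z₀ δ ∩ W, |Real.log (‖(ε : ℂ) + h z‖)|)
      (nhdsWithin 0 (Set.Ioi 0)) (nhds 0) := by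
  set S : Set ℂ := ball z₀ δ ∩ W with hS_def
  have hS : MeasurableSet S := measurableSet_ball.inter hW
  have hSsub : S ⊆ closedBall z₀ δ :=
    Set.inter_subset_left.trans ball_subset_closedBall
  -- integrability of h on S
  have hint : IntegrableOn h S volume := by
    have : IntegrableOn h (closedBall z₀ δ) volume :=
      hloc.integrableOn_compact_subset hcl (isCompact_closedBall _ _)
    exact this.mono_set hSsub
  have hmeas : AEStronglyMeasurable h (volume.restrict S) := hint.aestronglyMeasurable
  -- the bound
  have hbound_int : Integrable (fun z => 1 + ‖h z‖) (volume.restrict S) := by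
    have : Integrable (fun z => ‖h z‖) (volume.restrict S) := by
      simpa using hint.norm
    have hSfin : volume S < ⊤ :=
      lt_of_le_of_lt (measure_mono hSsub) (measure_closedBall_lt_top)
    exact ((integrableOn_const (hs := hSfin.ne)) : IntegrableOn (fun _ => (1:ℝ)) S volume).add this
  -- the family
  set F : ℝ → ℂ → ℝ := fun ε z =>
    (1 / Real.log (1 / ε)) * |Real.log (‖(ε : ℂ) + h z‖)| with hF_def
  have key : Tendsto (fun ε => ∫ z, F ε z ∂(volume.restrict S))
      (nhdsWithin 0 (Set.Ioi 0)) (nhds (∫ _z, (0:ℝ) ∂(volume.restrict S))) := by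
    apply tendsto_integral_filter_of_dominated_convergence
      (fun z => 1 + ‖h z‖)
    · -- a.e. strong measurability
      filter_upwards with ε
      have h1 : AEMeasurable (fun z => ‖(ε : ℂ) + h z‖) (volume.restrict S) :=
        continuous_norm.measurable.comp_aemeasurable
          (aemeasurable_const.add hmeas.aemeasurable)
      exact ((measurable_const.mul
        (measurable_abs.comp Real.measurable_log)).comp_aemeasurable h1).aestronglyMeasurable
    · -- eventual bound
      have hmem : Set.Ioo (0:ℝ) (Real.exp (-1)) ∈ nhdsWithin (0:ℝ) (Set.Ioi 0) :=
        Ioo_mem_nhdsGT_of_mem ⟨le_refl _, Real.exp_pos _⟩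
      filter_upwards [hmem] with ε hε
      rw [ae_restrict_iff' hS]
      filter_upwards with z hz
      obtain ⟨hε0, hε1⟩ := hε
      have hzW : z ∈ W := hz.2
      have hre0 : 0 ≤ (h z).re := hre z hzW
      have hεlt1 : ε < 1 := hε1.trans (by
        have := Real.exp_lt_one_iff.mpr (by norm_num : (-1:ℝ) < 0)
        linarith)
      have hlogε : Real.log ε < -1 := by
        have := Real.log_lt_log hε0 hε1
        simpa [Real.log_exp] using this
      have hL : 1 < Real.log (1 / ε) := by
        rw [Real.log_div one_ne_zero (ne_of_gt hε0), Real.log_one]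
        linarith
      have hLpos : 0 < Real.log (1 / ε) := by linarith
      have habs_lb : ε ≤ ‖(ε : ℂ) + h z‖ := by
        have := Complex.re_le_norm ((ε : ℂ) + h z)
        simp only [Complex.add_re, Complex.ofReal_re] at this
        linarith
      have habs_pos : 0 < ‖(ε : ℂ) + h z‖ := lt_of_lt_of_le hε0 habs_lb
      have habs_ub : ‖(ε : ℂ) + h z‖ ≤ ε + ‖h z‖ := by
        calc ‖(ε : ℂ) + h z‖ ≤ ‖(ε : ℂ)‖ + ‖h z‖ :=
              norm_add_le _ _
          _ = ε + ‖h z‖ := by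
              rw [Complex.norm_real, Real.norm_eq_abs, abs_of_pos hε0]
      have hnorm : ‖F ε z‖ = (1 / Real.log (1 / ε)) *
          |Real.log (‖(ε : ℂ) + h z‖)| := by
        rw [Real.norm_eq_abs, abs_mul, abs_of_pos (by positivity : (0:ℝ) < 1 / Real.log (1/ε)),
          abs_abs]
      rw [hnorm]
      rcases le_or_gt (‖(ε : ℂ) + h z‖) 1 with hcase | hcase
      · -- |log| ≤ log(1/ε)
        have hlog_le : |Real.log (‖(ε : ℂ) + h z‖)| ≤ Real.log (1 / ε) := by
          rw [abs_of_nonpos (Real.log_nonpos habs_pos.le hcase)]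
          rw [Real.log_div one_ne_zero (ne_of_gt hε0), Real.log_one, zero_sub]
          have := Real.log_le_log hε0 habs_lb
          linarith
        have : (1 / Real.log (1 / ε)) * |Real.log (‖(ε : ℂ) + h z‖)| ≤ 1 := by
          rw [div_mul_eq_mul_div, one_mul, div_le_one hLpos]
          exact hlog_le
        have habs0 : 0 ≤ ‖h z‖ := norm_nonneg _
        linarith
      · -- |log| = log ≤ |h z|
        have hlogpos : 0 ≤ Real.log (‖(ε : ℂ) + h z‖) :=
          Real.log_nonneg hcase.le
        have hlog_le : |Real.log (‖(ε : ℂ) + h z‖)| ≤ ‖h z‖ := by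
          rw [abs_of_nonneg hlogpos]
          have h1 := Real.log_le_sub_one_of_pos habs_pos
          linarith [habs_ub]
        have h1L : 1 / Real.log (1 / ε) ≤ 1 := by
          rw [div_le_one hLpos]; linarith
        calc (1 / Real.log (1 / ε)) * |Real.log (‖(ε : ℂ) + h z‖)|
            ≤ 1 * ‖h z‖ := by
              apply mul_le_mul h1L hlog_le (abs_nonneg _) zero_le_one
          _ = ‖h z‖ := one_mul _
          _ ≤ 1 + ‖h z‖ := by linarith
    · exact hbound_int
    · -- pointwise limit
      have hae : ∀ᵐ z ∂(volume.restrict S), z ∉ {z ∈ W | (h z).re = 0} := by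
        apply ae_restrict_of_ae
        rw [ae_iff]
        simpa using hnull
      rw [ae_restrict_iff' hS] at hae ⊢
      filter_upwards [hae] with z hz hzS
      have hzW : z ∈ W := hzS.2
      have hre_pos : 0 < (h z).re := by
        rcases lt_or_eq_of_le (hre z hzW) with h' | h'
        · exact h'
        · exact absurd ⟨hzW, h'.symm⟩ (hz hzS)
      have hz_ne : h z ≠ 0 := fun hcontra => by simp [hcontra] at hre_pos
      have habs_ne : ‖h z‖ ≠ 0 := norm_ne_zero_iff.mpr hz_ne
      -- first factor → 0
      have h1 : Tendsto (fun ε : ℝ => 1 / Real.log (1 / ε))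
          (nhdsWithin 0 (Set.Ioi 0)) (nhds 0) := by
        have hlogtop : Tendsto (fun ε : ℝ => Real.log ε⁻¹)
            (nhdsWithin 0 (Set.Ioi 0)) atTop :=
          Real.tendsto_log_atTop.comp tendsto_inv_nhdsGT_zero
        simpa [one_div, Pi.inv_def] using hlogtop.inv_tendsto_atTop
      -- second factor → |log |h z||
      have h2 : Tendsto (fun ε : ℝ => |Real.log (‖(ε : ℂ) + h z‖)|)
          (nhdsWithin 0 (Set.Ioi 0)) (nhds (|Real.log (‖h z‖)|)) := by
        have hc1 : Tendsto (fun ε : ℝ => (ε : ℂ) + h z) (nhdsWithin 0 (Set.Ioi 0))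
            (nhds (h z)) := by
          have : Continuous (fun ε : ℝ => (ε : ℂ) + h z) :=
            (Complex.continuous_ofReal).add continuous_const
          have := this.tendsto 0
          simpa using this.mono_left nhdsWithin_le_nhds
        have hc2 : Tendsto (fun ε : ℝ => ‖(ε : ℂ) + h z‖)
            (nhdsWithin 0 (Set.Ioi 0)) (nhds (‖h z‖)) :=
          (continuous_norm.tendsto _).comp hc1
        have hc3 : Tendsto (fun ε : ℝ => Real.log (‖(ε : ℂ) + h z‖))
            (nhdsWithin 0 (Set.Ioi 0)) (nhds (Real.log (‖h z‖))) :=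
          (Real.continuousAt_log habs_ne).tendsto.comp hc2
        exact (continuous_abs.tendsto _).comp hc3
      have := h1.mul h2
      rw [zero_mul] at this
      exact this
  have heq : ∀ ε : ℝ, ∫ z, F ε z ∂(volume.restrict S) =
      (1 / Real.log (1 / ε)) * ∫ z in S, |Real.log (‖(ε : ℂ) + h z‖)| := by
    intro ε
    exact integral_const_mul _ _
  simp only [heq, integral_zero] at key
  exact key
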